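/- Let Q ∈ {0,1}^{m×n} be a binary matrix, x ∈ [n] a column index, let L = [n]\{x}, and let R = {z ∈ [m] : Q_{z,x} = 0}. For a row j ∈ R, define H by setting entry (j,x) to 1 and keeping all other entries of Q. Then the following are equivalent: (1) the transversal matroids of Q and H coincide (same bases); (2) the transversal matroids of Q_{R,:} and H_{R,:} coincide; (3) mrank(Q_{R,:}) = mrank(H_{R,:}); (4) mrank(Q_{R\{j\}, L}) < mrank(Q_{R, L}), i.e., j is a coloop of the transversal matroid of Q_{R,L}. -/

import Mathlib

open Classical

/-- Independence in the transversal matroid of a binary matrix `Q` (rows as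
ground set): `Z` is matchable injectively into the columns via `1`-entries. -/
def TIndep {α β : Type*} (Q : α → β → Bool) (Z : Finset α) : Prop :=
  ∃ φ : α → β, Set.InjOn φ Z ∧ ∀ z ∈ Z, Q z (φ z) = true

/-- Bases of the transversal matroid of `Q` restricted to the row set `R`:
the maximal independent subsets of `R`. -/
def TBasesOn {α β : Type*} (Q : α → β → Bool) (R : Finset α) : Set (Finset α) :=
  {B | B ⊆ R ∧ TIndep Q B ∧ ∀ B' ⊆ R, TIndep Q B' → B ⊆ B' → B = B'}

/-- The matching rank of `Q` restricted to row set `R`: the maximum size of an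
independent (matchable) subset of `R`. -/
noncomputable def trankOn {α β : Type*} (Q : α → β → Bool) (R : Finset α) : ℕ :=
  sSup {k | ∃ Z ⊆ R, TIndep Q Z ∧ Z.card = k}

/-- Replace the column `x` of `Q` by the boolean column `d`. -/
def replaceCol {α β : Type*} [DecidableEq β] (Q : α → β → Bool) (x : β)
    (d : α → Bool) : α → β → Bool :=
  fun i j => if j = x then d i else Q i j

set_option linter.unusedSectionVars false

section Aux
variable {α β : Type*} [Fintype α] [Fintype β] [DecidableEq α] [DecidableEq β]

noncomputable def nbhd (Q : α → β → Bool) (S : Finset α) : Finset β :=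
  S.biUnion fun z => Finset.univ.filter fun c => Q z c = true

lemma mem_nbhd {Q : α → β → Bool} {S : Finset α} {c : β} :
    c ∈ nbhd Q S ↔ ∃ z ∈ S, Q z c = true := by
  simp [nbhd]

lemma nbhd_mono {Q : α → β → Bool} {S T : Finset α} (h : S ⊆ T) : nbhd Q S ⊆ nbhd Q T :=
  Finset.biUnion_subset_biUnion_of_subset_left _ h

lemma nbhd_union {Q : α → β → Bool} (S T : Finset α) :
    nbhd Q (S ∪ T) = nbhd Q S ∪ nbhd Q T := by
  ext c; simp only [mem_nbhd, Finset.mem_union]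
  aesop

lemma TIndep.subset {Q : α → β → Bool} {Z W : Finset α} (h : TIndep Q Z) (hw : W ⊆ Z) :
    TIndep Q W := by
  obtain ⟨φ, hinj, hφ⟩ := h
  exact ⟨φ, hinj.mono (Finset.coe_subset.2 hw), fun z hz => hφ z (hw hz)⟩

lemma tindep_empty [Nonempty β] (Q : α → β → Bool) : TIndep Q (∅ : Finset α) :=
  ⟨fun _ => Classical.arbitrary β, by simp [Set.InjOn], by simp⟩

lemma tindep_mono_mat {Q Q' : α → β → Bool} (h : ∀ i c, Q i c = true → Q' i c = true)
    {Z : Finset α} (hZ : TIndep Q Z) : TIndep Q' Z := by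
  obtain ⟨φ, hinj, hφ⟩ := hZ
  exact ⟨φ, hinj, fun z hz => h _ _ (hφ z hz)⟩

lemma TIndep.hall {Q : α → β → Bool} {Z : Finset α} (h : TIndep Q Z) {S : Finset α}
    (hS : S ⊆ Z) : S.card ≤ (nbhd Q S).card := by
  obtain ⟨φ, hinj, hφ⟩ := h
  have himg : S.image φ ⊆ nbhd Q S := by
    intro c hc
    obtain ⟨z, hz, rfl⟩ := Finset.mem_image.1 hc
    exact mem_nbhd.2 ⟨z, hz, hφ z (hS hz)⟩
  calc S.card = (S.image φ).card :=
        (Finset.card_image_of_injOn (hinj.mono (Finset.coe_subset.2 hS))).symm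
    _ ≤ _ := Finset.card_le_card himg

lemma tindep_of_hall [Nonempty β] {Q : α → β → Bool} {Z : Finset α}
    (h : ∀ S ⊆ Z, S.card ≤ (nbhd Q S).card) : TIndep Q Z := by
  have key : ∀ s : Finset {z : α // z ∈ Z},
      s.card ≤ (s.biUnion fun z => Finset.univ.filter fun c => Q z.1 c = true).card := by
    intro s
    have h1 : (s.image Subtype.val).card = s.card :=
      Finset.card_image_of_injective _ Subtype.val_injective
    have h2 : nbhd Q (s.image Subtype.val) =
        s.biUnion fun z => Finset.univ.filter fun c => Q z.1 c = true := by
      rw [nbhd, Finset.image_biUnion]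
    have h3 : s.image Subtype.val ⊆ Z := by
      intro z hz
      obtain ⟨⟨w, hwZ⟩, _, rfl⟩ := Finset.mem_image.1 hz
      exact hwZ
    calc s.card = (s.image Subtype.val).card := h1.symm
      _ ≤ (nbhd Q (s.image Subtype.val)).card := h _ h3
      _ = _ := by rw [h2]
  obtain ⟨f, hfinj, hf⟩ := (Finset.all_card_le_biUnion_card_iff_exists_injective _).1 key
  refine ⟨fun z => if h : z ∈ Z then f ⟨z, h⟩ else Classical.arbitrary β, ?_, ?_⟩
  · intro z hz w hw hzw
    simp only [Finset.mem_coe] at hz hw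
    dsimp only at hzw
    rw [dif_pos hz, dif_pos hw] at hzw
    exact congrArg Subtype.val (hfinj hzw)
  · intro z hz
    dsimp only
    rw [dif_pos hz]
    have := hf ⟨z, hz⟩
    simpa using this

lemma tight_union {Q : α → β → Bool} {Z S T : Finset α} (hZ : TIndep Q Z)
    (hS : S ⊆ Z) (hT : T ⊆ Z) (hStight : (nbhd Q S).card ≤ S.card)
    (hTtight : (nbhd Q T).card ≤ T.card) :
    (nbhd Q (S ∪ T)).card ≤ (S ∪ T).card := by
  have h1 : nbhd Q (S ∪ T) = nbhd Q S ∪ nbhd Q T := nbhd_union S T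
  have h2 : nbhd Q (S ∩ T) ⊆ nbhd Q S ∩ nbhd Q T :=
    Finset.subset_inter (nbhd_mono Finset.inter_subset_left)
      (nbhd_mono Finset.inter_subset_right)
  have h3 : (S ∩ T).card ≤ (nbhd Q (S ∩ T)).card :=
    hZ.hall (Finset.inter_subset_left.trans hS)
  have h4 := Finset.card_union_add_card_inter (nbhd Q S) (nbhd Q T)
  have h5 := Finset.card_union_add_card_inter S T
  have h6 := Finset.card_le_card h2
  rw [h1]
  omega

lemma tindep_exchange [Nonempty β] {Q : α → β → Bool} {Z W : Finset α}
    (hZ : TIndep Q Z) (hW : TIndep Q W) (hcard : Z.card < W.card) :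
    ∃ w ∈ W, w ∉ Z ∧ TIndep Q (insert w Z) := by
  by_contra hcon
  push_neg at hcon
  have choose0 : ∀ w ∈ W \ Z, ∃ T, T ⊆ Z ∧ (nbhd Q T).card ≤ T.card ∧
      (Finset.univ.filter fun c => Q w c = true) ⊆ nbhd Q T := by
    intro w hw
    rw [Finset.mem_sdiff] at hw
    have hni := hcon w hw.1 hw.2
    have hfail : ¬ ∀ S ⊆ insert w Z, S.card ≤ (nbhd Q S).card :=
      fun hh => hni (tindep_of_hall hh)
    push_neg at hfail
    obtain ⟨S, hSsub, hSlt⟩ := hfail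
    have hwS : w ∈ S := by
      by_contra hwS
      have hSZ : S ⊆ Z := by
        intro z hz
        rcases Finset.mem_insert.1 (hSsub hz) with rfl | h
        · exact absurd hz hwS
        · exact h
      exact absurd (hZ.hall hSZ) (by omega)
    set T := S.erase w with hT
    have hTZ : T ⊆ Z := by
      intro z hz
      obtain ⟨hzw, hzS⟩ := Finset.mem_erase.1 hz
      rcases Finset.mem_insert.1 (hSsub hzS) with rfl | h
      · exact absurd rfl hzw
      · exact h
    have hScard : T.card + 1 = S.card := Finset.card_erase_add_one hwS
    have hThall : T.card ≤ (nbhd Q T).card := hZ.hall hTZ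
    have hTS : nbhd Q T ⊆ nbhd Q S := nbhd_mono (Finset.erase_subset _ _)
    have hTcard := Finset.card_le_card hTS
    have heq : nbhd Q T = nbhd Q S :=
      Finset.eq_of_subset_of_card_le hTS (by omega)
    refine ⟨T, hTZ, by omega, ?_⟩
    intro c hc
    rw [heq]
    have hcw : Q w c = true := (Finset.mem_filter.1 hc).2
    exact mem_nbhd.2 ⟨w, hwS, hcw⟩
  choose! T hTsub hTtight hTnb using choose0
  have hsup : ∀ F : Finset α, F ⊆ W \ Z →
      (F.sup T ⊆ Z ∧ (nbhd Q (F.sup T)).card ≤ (F.sup T).card) := by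
    intro F
    induction F using Finset.induction_on with
    | empty => intro _; constructor
               · simp
               · simp [nbhd]
    | insert a s hnotmem ih =>
      intro hsub
      have haWZ : a ∈ W \ Z := hsub (Finset.mem_insert_self a s)
      have hsWZ : s ⊆ W \ Z := fun z hz => hsub (Finset.mem_insert_of_mem hz)
      obtain ⟨ih1, ih2⟩ := ih hsWZ
      rw [Finset.sup_insert, Finset.sup_eq_union]
      exact ⟨Finset.union_subset (hTsub a haWZ) ih1,
        tight_union hZ (hTsub a haWZ) ih1 (hTtight a haWZ) ih2⟩
  set Sstar := (W \ Z).sup T with hSdef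
  obtain ⟨hSsubZ, hStight⟩ : Sstar ⊆ Z ∧ (nbhd Q Sstar).card ≤ Sstar.card :=
    hsup (W \ Z) Finset.Subset.rfl
  have hnbW : ∀ w ∈ W \ Z, (Finset.univ.filter fun c => Q w c = true) ⊆ nbhd Q Sstar := by
    intro w hw
    refine (hTnb w hw).trans (nbhd_mono ?_)
    exact Finset.le_sup (f := T) hw
  -- counting
  set U := (W \ Z) ∪ (W ∩ Sstar) with hU
  have hUW : U ⊆ W := by
    rw [hU]
    exact Finset.union_subset (Finset.sdiff_subset) (Finset.inter_subset_left)
  have hUhall : U.card ≤ (nbhd Q U).card := hW.hall hUW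
  have hUnb : nbhd Q U ⊆ nbhd Q Sstar := by
    rw [hU, nbhd_union]
    refine Finset.union_subset ?_ (nbhd_mono Finset.inter_subset_right)
    intro c hc
    obtain ⟨z, hz, hzc⟩ := mem_nbhd.1 hc
    exact hnbW z hz (Finset.mem_filter.2 ⟨Finset.mem_univ _, hzc⟩)
  have hdisj : Disjoint (W \ Z) (W ∩ Sstar) := by
    rw [Finset.disjoint_left]
    intro w hw hw2
    exact (Finset.mem_sdiff.1 hw).2 (hSsubZ (Finset.mem_inter.1 hw2).2)
  have hUcard : U.card = (W \ Z).card + (W ∩ Sstar).card := Finset.card_union_of_disjoint hdisj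
  have h1 : (W ∩ Sstar).card = (Sstar ∩ W).card := by rw [Finset.inter_comm]
  have h2 := Finset.card_sdiff_add_card_inter Sstar W
  have h3 : (Sstar \ W).card ≤ (Z \ W).card :=
    Finset.card_le_card (Finset.sdiff_subset_sdiff hSsubZ Finset.Subset.rfl)
  have h4 := Finset.card_sdiff_add_card_inter W Z
  have h5 := Finset.card_sdiff_add_card_inter Z W
  have h6 : (W ∩ Z).card = (Z ∩ W).card := by rw [Finset.inter_comm]
  have h7 := Finset.card_le_card hUnb
  omega

end Aux

section Aux2
variable {α β : Type*} [Fintype α] [Fintype β] [DecidableEq α] [DecidableEq β]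

lemma tindep_extend [Nonempty β] {Q : α → β → Bool} :
    ∀ n {C W : Finset α}, W.card - C.card ≤ n → TIndep Q C → TIndep Q W →
    ∃ C', TIndep Q C' ∧ C ⊆ C' ∧ C' ⊆ C ∪ W ∧ W.card ≤ C'.card := by
  intro n
  induction n with
  | zero =>
    intro C W h hC _
    exact ⟨C, hC, Finset.Subset.rfl, Finset.subset_union_left, by omega⟩
  | succ n ih =>
    intro C W h hC hW
    by_cases hlt : C.card < W.card
    · obtain ⟨w, hwW, hwC, hins⟩ := tindep_exchange hC hW hlt
      obtain ⟨C', h1, h2, h3, h4⟩ :=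
        ih (C := insert w C) (W := W)
          (by rw [Finset.card_insert_of_notMem hwC]; omega) hins hW
      refine ⟨C', h1, (Finset.subset_insert _ _).trans h2, ?_, h4⟩
      refine h3.trans ?_
      intro z hz
      rcases Finset.mem_union.1 hz with h' | h'
      · rcases Finset.mem_insert.1 h' with rfl | h''
        · exact Finset.mem_union_right _ hwW
        · exact Finset.mem_union_left _ h''
      · exact Finset.mem_union_right _ h'
    · exact ⟨C, hC, Finset.Subset.rfl, Finset.subset_union_left, by omega⟩

lemma exists_basis_superset [Nonempty β] {Q : α → β → Bool} {R Z : Finset α}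
    (hZR : Z ⊆ R) (hZ : TIndep Q Z) : ∃ B ∈ TBasesOn Q R, Z ⊆ B := by
  have main : ∀ n, ∀ Z : Finset α, Z ⊆ R → TIndep Q Z → R.card - Z.card ≤ n →
      ∃ B ∈ TBasesOn Q R, Z ⊆ B := by
    intro n
    induction n with
    | zero =>
      intro Z hZR hZ hn
      have hZR' : Z = R := Finset.eq_of_subset_of_card_le hZR (by omega)
      subst hZR'
      exact ⟨Z, ⟨hZR, hZ, fun B' hB' _ hZB' => Finset.Subset.antisymm hZB' hB'⟩,
        Finset.Subset.rfl⟩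
    | succ n ih =>
      intro Z hZR hZ hn
      by_cases hmax : ∀ B' ⊆ R, TIndep Q B' → Z ⊆ B' → Z = B'
      · exact ⟨Z, ⟨hZR, hZ, hmax⟩, Finset.Subset.rfl⟩
      · push_neg at hmax
        obtain ⟨B', hB'R, hB', hZB', hne⟩ := hmax
        obtain ⟨w, hwB', hwZ⟩ := Finset.exists_of_ssubset (hZB'.ssubset_of_ne hne)
        have hins : TIndep Q (insert w Z) := hB'.subset (Finset.insert_subset hwB' hZB')
        obtain ⟨B, hB, hsub⟩ := ih (insert w Z)
          (Finset.insert_subset (hB'R hwB') hZR) hins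
          (by rw [Finset.card_insert_of_notMem hwZ]; omega)
        exact ⟨B, hB, (Finset.subset_insert _ _).trans hsub⟩
  exact main (R.card - Z.card) Z hZR hZ le_rfl

lemma trank_spec [Nonempty β] (Q : α → β → Bool) (R : Finset α) :
    (∃ Z, Z ⊆ R ∧ TIndep Q Z ∧ Z.card = trankOn Q R) ∧
    ∀ Z, Z ⊆ R → TIndep Q Z → Z.card ≤ trankOn Q R := by
  have hbdd : BddAbove {k | ∃ Z ⊆ R, TIndep Q Z ∧ Z.card = k} := by
    refine ⟨R.card, ?_⟩
    rintro k ⟨Z, hZR, _, hk⟩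
    exact hk ▸ Finset.card_le_card hZR
  have hne : trankOn Q R ∈ {k | ∃ Z ⊆ R, TIndep Q Z ∧ Z.card = k} :=
    Nat.sSup_mem ⟨0, ∅, Finset.empty_subset R, tindep_empty Q, rfl⟩ hbdd
  obtain ⟨Z, hZR, hZ, hZc⟩ := hne
  exact ⟨⟨Z, hZR, hZ, hZc⟩, fun Z' hZ'R hZ' => le_csSup hbdd ⟨Z', hZ'R, hZ', rfl⟩⟩

lemma basis_card [Nonempty β] {Q : α → β → Bool} {R B : Finset α}
    (hB : B ∈ TBasesOn Q R) : B.card = trankOn Q R := by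
  obtain ⟨hBR, hBi, hBmax⟩ := hB
  obtain ⟨⟨M, hMR, hMi, hMc⟩, hub⟩ := trank_spec Q R
  refine le_antisymm (hub B hBR hBi) ?_
  by_contra hlt
  push_neg at hlt
  obtain ⟨w, hwM, hwB, hins⟩ := tindep_exchange hBi hMi (by omega)
  have heq := hBmax (insert w B) (Finset.insert_subset (hMR hwM) hBR) hins
    (Finset.subset_insert _ _)
  exact hwB (by rw [heq]; exact Finset.mem_insert_self w B)

lemma max_indep_basis [Nonempty β] {Q : α → β → Bool} {R M : Finset α}
    (hMR : M ⊆ R) (hMi : TIndep Q M) (hMc : M.card = trankOn Q R) :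
    M ∈ TBasesOn Q R := by
  refine ⟨hMR, hMi, fun B' hB'R hB' hMB' => Finset.eq_of_subset_of_card_le hMB' ?_⟩
  have := (trank_spec Q R).2 B' hB'R hB'
  omega

lemma trank_mono [Nonempty β] (Q : α → β → Bool) {R R' : Finset α} (h : R ⊆ R') :
    trankOn Q R ≤ trankOn Q R' := by
  obtain ⟨⟨M, hMR, hMi, hMc⟩, _⟩ := trank_spec Q R
  rw [← hMc]
  exact (trank_spec Q R').2 M (hMR.trans h) hMi

lemma trank_congr {Q Q' : α → β → Bool} {R : Finset α}
    (h : ∀ Z, Z ⊆ R → (TIndep Q Z ↔ TIndep Q' Z)) :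
    trankOn Q R = trankOn Q' R := by
  unfold trankOn
  congr 1
  ext k
  constructor <;> rintro ⟨Z, h1, h2, h3⟩
  · exact ⟨Z, h1, (h Z h1).1 h2, h3⟩
  · exact ⟨Z, h1, (h Z h1).2 h2, h3⟩

lemma bases_congr {Q Q' : α → β → Bool} (h : ∀ Z : Finset α, TIndep Q Z ↔ TIndep Q' Z)
    (R : Finset α) : TBasesOn Q R = TBasesOn Q' R := by
  ext B
  unfold TBasesOn
  simp only [Set.mem_setOf_eq]
  constructor <;> rintro ⟨h1, h2, h3⟩
  · exact ⟨h1, (h B).1 h2, fun B' a b c => h3 B' a ((h B').2 b) c⟩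
  · exact ⟨h1, (h B).2 h2, fun B' a b c => h3 B' a ((h B').1 b) c⟩

end Aux2


/-- **When an edge in a bipartite graph can be added without changing the
transversal matroid.** With `R` the rows having a `0` in column `x`, `j ∈ R`,
and `H` equal to `Q` with entry `(j, x)` set to `1`, the following are
equivalent: (1) `Q` and `H` have the same bases; (2) their matroids restricted
to rows `R` have the same bases; (3) `mrank(Q_{R,:}) = mrank(H_{R,:})`;
(4) `mrank(Q_{R∖{j}, L}) < mrank(Q_{R, L})`, i.e. `j` is a coloop of the
matroid of `Q_{R,L}`, where `L = [n] ∖ {x}`. -/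
theorem edge_flip_tfae {α β : Type*} [Fintype α] [Fintype β]
    [DecidableEq α] [DecidableEq β] (Q : α → β → Bool) (x : β) (j : α)
    (hj : Q j x = false) :
    let H : α → β → Bool := fun i j' => if i = j ∧ j' = x then true else Q i j'
    let QL : α → β → Bool := replaceCol Q x fun _ => false
    let R : Finset α := Finset.univ.filter fun z => Q z x = false
    ((TBasesOn Q Finset.univ = TBasesOn H Finset.univ ↔
        TBasesOn Q R = TBasesOn H R) ∧
      (TBasesOn Q R = TBasesOn H R ↔ trankOn Q R = trankOn H R) ∧
      (trankOn Q R = trankOn H R ↔ trankOn QL (R.erase j) < trankOn QL R)) := by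
  intro H QL R
  haveI : Nonempty β := ⟨x⟩
  have hH : ∀ i c, H i c = if i = j ∧ c = x then true else Q i c := fun _ _ => rfl
  have hQL : ∀ i c, QL i c = if c = x then false else Q i c := fun _ _ => rfl
  have hR : ∀ z : α, z ∈ R ↔ Q z x = false := by
    intro z
    constructor
    · intro h; exact (Finset.mem_filter.1 h).2
    · intro h; exact Finset.mem_filter.2 ⟨Finset.mem_univ z, h⟩
  have hjR : j ∈ R := (hR j).2 hj
  have hQH : ∀ i c, Q i c = true → H i c = true := by
    intro i c h; rw [hH]; split <;> simp [h]
  have hQLQ : ∀ i c, QL i c = true → Q i c = true := by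
    intro i c h
    rw [hQL] at h
    by_cases hc : c = x
    · rw [if_pos hc] at h; exact absurd h (by simp)
    · rwa [if_neg hc] at h
  have hQLx : ∀ i, QL i x = false := fun i => by rw [hQL]; simp
  have hQLne : ∀ i c, c ≠ x → QL i c = Q i c := fun i c hc => by rw [hQL, if_neg hc]
  have hHne : ∀ i c, ¬(i = j ∧ c = x) → H i c = Q i c := fun i c hc => by
    rw [hH, if_neg hc]
  -- the key local characterization of H-independence
  have M1 : ∀ Z : Finset α, TIndep H Z ↔ TIndep Q Z ∨ (j ∈ Z ∧ TIndep QL (Z.erase j)) := by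
    intro Z
    constructor
    · rintro ⟨φ, hinj, hφ⟩
      by_cases h1 : j ∈ Z ∧ φ j = x
      · obtain ⟨hjZ, hjx⟩ := h1
        refine Or.inr ⟨hjZ, φ,
          hinj.mono (Finset.coe_subset.2 (Finset.erase_subset j Z)), ?_⟩
        intro z hz
        obtain ⟨hzj, hzZ⟩ := Finset.mem_erase.1 hz
        have hphnex : φ z ≠ x := by
          intro hzx
          exact hzj (hinj (Finset.mem_coe.2 hzZ) (Finset.mem_coe.2 hjZ) (hzx.trans hjx.symm))
        rw [hQLne z _ hphnex, ← hHne z _ (fun hc => hzj hc.1)]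
        exact hφ z hzZ
      · refine Or.inl ⟨φ, hinj, ?_⟩
        intro z hz
        have : ¬(z = j ∧ φ z = x) := by
          rintro ⟨rfl, hzx⟩
          exact h1 ⟨hz, hzx⟩
        rw [← hHne z _ this]
        exact hφ z hz
    · rintro (hQ | ⟨hjZ, ψ, hinjψ, hψ⟩)
      · exact tindep_mono_mat hQH hQ
      · have hψne : ∀ z ∈ Z.erase j, ψ z ≠ x := by
          intro z hz hzx
          have := hψ z hz
          rw [hzx, hQLx] at this
          exact absurd this (by simp)
        refine ⟨fun z => if z = j then x else ψ z, ?_, ?_⟩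
        · intro z hz w hw hzw
          simp only [Finset.mem_coe] at hz hw
          dsimp only at hzw
          by_cases hzj : z = j <;> by_cases hwj : w = j
          · rw [hzj, hwj]
          · rw [if_pos hzj, if_neg hwj] at hzw
            exact absurd hzw.symm (hψne w (Finset.mem_erase.2 ⟨hwj, hw⟩))
          · rw [if_neg hzj, if_pos hwj] at hzw
            exact absurd hzw (hψne z (Finset.mem_erase.2 ⟨hzj, hz⟩))
          · rw [if_neg hzj, if_neg hwj] at hzw
            exact hinjψ (Finset.mem_coe.2 (Finset.mem_erase.2 ⟨hzj, hz⟩))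
              (Finset.mem_coe.2 (Finset.mem_erase.2 ⟨hwj, hw⟩)) hzw
        · intro z hz
          dsimp only
          by_cases hzj : z = j
          · rw [if_pos hzj, hzj, hH, if_pos ⟨rfl, rfl⟩]
          · rw [if_neg hzj, hHne z _ (fun hc => hzj hc.1),
              ← hQLne z _ (hψne z (Finset.mem_erase.2 ⟨hzj, hz⟩))]
            exact hψ z (Finset.mem_erase.2 ⟨hzj, hz⟩)
  -- Q and QL agree on subsets of R
  have M2 : ∀ Z : Finset α, Z ⊆ R → (TIndep Q Z ↔ TIndep QL Z) := by
    intro Z hZR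
    constructor
    · rintro ⟨φ, hinj, hφ⟩
      refine ⟨φ, hinj, ?_⟩
      intro z hz
      have hzx : φ z ≠ x := by
        intro h
        have h1 := hφ z hz
        rw [h, (hR z).1 (hZR hz)] at h1
        exact absurd h1 (by simp)
      rw [hQLne z _ hzx]
      exact hφ z hz
    · exact tindep_mono_mat hQLQ
  have F1 : trankOn Q R = trankOn QL R := trank_congr M2
  have F2 : trankOn QL (R.erase j) ≤ trankOn QL R := trank_mono QL (Finset.erase_subset j R)
  have F3 : trankOn H R = max (trankOn QL R) (trankOn QL (R.erase j) + 1) := by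
    refine le_antisymm ?_ (max_le ?_ ?_)
    · obtain ⟨⟨Z, hZR, hZi, hZc⟩, _⟩ := trank_spec H R
      rw [← hZc]
      rcases (M1 Z).1 hZi with hQ | ⟨hjZ, hD⟩
      · have h := (trank_spec Q R).2 Z hZR hQ
        rw [F1] at h
        exact le_max_of_le_left h
      · have hsub : Z.erase j ⊆ R.erase j := Finset.erase_subset_erase _ hZR
        have h1 : (Z.erase j).card ≤ trankOn QL (R.erase j) := (trank_spec QL _).2 _ hsub hD
        have h2 : (Z.erase j).card + 1 = Z.card := Finset.card_erase_add_one hjZ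
        exact le_max_of_le_right (by omega)
    · rw [← F1]
      obtain ⟨⟨Z, hZR, hZi, hZc⟩, _⟩ := trank_spec Q R
      rw [← hZc]
      exact (trank_spec H R).2 Z hZR ((M1 Z).2 (Or.inl hZi))
    · obtain ⟨⟨D, hDR, hDi, hDc⟩, _⟩ := trank_spec QL (R.erase j)
      have hjD : j ∉ D := fun h => (Finset.mem_erase.1 (hDR h)).1 rfl
      have hZi : TIndep H (insert j D) := (M1 _).2 (Or.inr ⟨Finset.mem_insert_self _ _, by
        rw [Finset.erase_insert hjD]; exact hDi⟩)
      have hZR : insert j D ⊆ R :=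
        Finset.insert_subset hjR (hDR.trans (Finset.erase_subset _ _))
      have h := (trank_spec H R).2 _ hZR hZi
      rw [Finset.card_insert_of_notMem hjD] at h
      omega
  have iff34 : (trankOn Q R = trankOn H R) ↔
      trankOn QL (R.erase j) < trankOn QL R := by
    rw [F1, F3]
    constructor
    · intro h
      have h2 := le_max_right (trankOn QL R) (trankOn QL (R.erase j) + 1)
      rw [← h] at h2
      omega
    · intro h
      exact (Nat.max_eq_left (by omega)).symm
  -- Key: if j is a coloop then every H-independent set is Q-independent
  have K : trankOn QL (R.erase j) < trankOn QL R →
      ∀ Z : Finset α, TIndep H Z → TIndep Q Z := by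
    intro her Z hZ
    rcases (M1 Z).1 hZ with hQ | ⟨hjZ, hD⟩
    · exact hQ
    by_contra hnQ
    have hfail : ¬ ∀ S ⊆ Z, S.card ≤ (nbhd Q S).card := fun hh => hnQ (tindep_of_hall hh)
    push_neg at hfail
    obtain ⟨S, hSZ, hSlt⟩ := hfail
    have hDQ : TIndep Q (Z.erase j) := tindep_mono_mat hQLQ hD
    have hjS : j ∈ S := by
      by_contra hjS
      have hsub : S ⊆ Z.erase j := fun z hz =>
        Finset.mem_erase.2 ⟨fun h => hjS (h ▸ hz), hSZ hz⟩
      exact absurd (hDQ.hall hsub) (by omega)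
    have hZhall : S.card ≤ (nbhd H S).card := hZ.hall hSZ
    have hNH : nbhd H S ⊆ insert x (nbhd Q S) := by
      intro c hc
      obtain ⟨z, hz, hzc⟩ := mem_nbhd.1 hc
      by_cases hcx : c = x
      · exact hcx ▸ Finset.mem_insert_self _ _
      · rw [hHne z c (fun hcc => hcx hcc.2)] at hzc
        exact Finset.mem_insert_of_mem (mem_nbhd.2 ⟨z, hz, hzc⟩)
    have hxN : x ∉ nbhd Q S := by
      intro hx
      have h1 : (nbhd H S).card ≤ (nbhd Q S).card :=
        Finset.card_le_card (hNH.trans (Finset.insert_subset hx Finset.Subset.rfl))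
      omega
    have hcard : (nbhd H S).card ≤ (nbhd Q S).card + 1 :=
      (Finset.card_le_card hNH).trans (Finset.card_insert_le _ _)
    have hSR : S ⊆ R := by
      intro z hz
      refine (hR z).2 ?_
      by_contra h
      rw [Bool.not_eq_false] at h
      exact hxN (mem_nbhd.2 ⟨z, hz, h⟩)
    have hNQL : nbhd QL S = nbhd Q S := by
      ext c
      simp only [mem_nbhd]
      constructor
      · rintro ⟨z, hz, h⟩; exact ⟨z, hz, hQLQ _ _ h⟩
      · rintro ⟨z, hz, h⟩
        have hcx : c ≠ x := fun hc => hxN (mem_nbhd.2 ⟨z, hz, hc ▸ h⟩)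
        exact ⟨z, hz, by rw [hQLne z _ hcx]; exact h⟩
    have hS'D : S.erase j ⊆ Z.erase j := Finset.erase_subset_erase _ hSZ
    have hS'QL : TIndep QL (S.erase j) := hD.subset hS'D
    have hS'R : S.erase j ⊆ R.erase j := Finset.erase_subset_erase _ hSR
    obtain ⟨⟨M, hMR, hMQL, hMc⟩, _⟩ := trank_spec QL R
    have hS'card : (S.erase j).card ≤ trankOn QL (R.erase j) :=
      (trank_spec QL (R.erase j)).2 _ hS'R hS'QL
    obtain ⟨C', hC'i, hC'sub, hC'union, hC'card⟩ :=
      tindep_extend M.card (C := S.erase j) (W := M) (by omega) hS'QL hMQL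
    have hjC' : j ∉ C' := by
      intro hjC'
      have hSC' : S ⊆ C' := by
        intro z hz
        by_cases hzj : z = j
        · exact hzj ▸ hjC'
        · exact hC'sub (Finset.mem_erase.2 ⟨hzj, hz⟩)
      have hhall := hC'i.hall hSC'
      rw [hNQL] at hhall
      omega
    have hC'R : C' ⊆ R.erase j := by
      intro z hz
      refine Finset.mem_erase.2 ⟨fun h => hjC' (h ▸ hz), ?_⟩
      rcases Finset.mem_union.1 (hC'union hz) with h | h
      · exact (Finset.erase_subset _ _) (hS'R h)
      · exact hMR h
    have hfin := (trank_spec QL (R.erase j)).2 C' hC'R hC'i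
    omega
  have indepeq : trankOn QL (R.erase j) < trankOn QL R →
      ∀ Z : Finset α, TIndep Q Z ↔ TIndep H Z :=
    fun h Z => ⟨fun hq => (M1 Z).2 (Or.inl hq), K h Z⟩
  have h23 : TBasesOn Q R = TBasesOn H R → trankOn Q R = trankOn H R := by
    intro hb
    obtain ⟨⟨M, hMR, hMi, hMc⟩, _⟩ := trank_spec Q R
    have hbasis : M ∈ TBasesOn Q R := max_indep_basis hMR hMi hMc
    have hbasis' : M ∈ TBasesOn H R := hb ▸ hbasis
    rw [← hMc, basis_card hbasis']
  have h12 : TBasesOn Q Finset.univ = TBasesOn H Finset.univ →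
      ∀ Z : Finset α, TIndep Q Z ↔ TIndep H Z := by
    intro hb Z
    constructor
    · intro h
      obtain ⟨B, hB, hZB⟩ := exists_basis_superset (Finset.subset_univ Z) h
      have hB' : B ∈ TBasesOn H Finset.univ := hb ▸ hB
      exact hB'.2.1.subset hZB
    · intro h
      obtain ⟨B, hB, hZB⟩ := exists_basis_superset (Finset.subset_univ Z) h
      have hB' : B ∈ TBasesOn Q Finset.univ := hb ▸ hB
      exact hB'.2.1.subset hZB
  refine ⟨⟨fun h1 => bases_congr (h12 h1) R,
      fun h2 => bases_congr (indepeq (iff34.1 (h23 h2))) Finset.univ⟩,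
    ⟨h23, fun h3 => bases_congr (indepeq (iff34.1 h3)) R⟩, iff34⟩
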